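/- Let C₀,...,C_N be complex numbers such that the scalar lower triangular Toeplitz matrix T_N is a contraction on ℂ^{N+1}. Then det(I - T_N* T_N) = 0 if and only if the shorted operator (I - T_N* T_N)_M = 0, where M = ℂ ⊕ 0 ⊕ ... ⊕ 0 is the first coordinate line. -/

import Mathlib

open Matrix
open scoped ComplexOrder

namespace Stmt19Aux

/-- sum of squared moduli of a vector -/
noncomputable def N2 {ι : Type*} [Fintype ι] (x : ι → ℂ) : ℝ :=
  ∑ i, Complex.normSq (x i)

lemma N2_nonneg {ι : Type*} [Fintype ι] (x : ι → ℂ) : 0 ≤ N2 x :=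
  Finset.sum_nonneg fun _ _ => Complex.normSq_nonneg _

lemma dot_self_re {ι : Type*} [Fintype ι] (x : ι → ℂ) : (star x ⬝ᵥ x).re = N2 x := by
  rw [dotProduct, Complex.re_sum, N2]
  refine Finset.sum_congr rfl fun i _ => ?_
  simp [Complex.mul_re, Complex.normSq_apply]

lemma quad_eq {m : ℕ} (T : Matrix (Fin m) (Fin m) ℂ) (x : Fin m → ℂ) :
    (star x ⬝ᵥ (1 - Tᴴ * T) *ᵥ x).re = N2 x - N2 (T *ᵥ x) := by
  have h1 : (1 - Tᴴ * T) *ᵥ x = x - Tᴴ *ᵥ (T *ᵥ x) := by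
    rw [sub_mulVec, one_mulVec, mulVec_mulVec]
  have h2 : star x ⬝ᵥ (Tᴴ *ᵥ (T *ᵥ x)) = star (T *ᵥ x) ⬝ᵥ (T *ᵥ x) := by
    rw [dotProduct_mulVec, vecMul_conjTranspose, star_star]
  rw [h1, dotProduct_sub, Complex.sub_re, dot_self_re, h2, dot_self_re]

lemma psd_re_nonneg {m : ℕ} {A : Matrix (Fin m) (Fin m) ℂ} (hA : A.PosSemidef)
    (x : Fin m → ℂ) : 0 ≤ (star x ⬝ᵥ A *ᵥ x).re := by
  have h := hA.dotProduct_mulVec_nonneg x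
  rw [Complex.le_def] at h
  simpa using h.1

lemma mulVec_eq_zero_of_re {m : ℕ} {A : Matrix (Fin m) (Fin m) ℂ} (hA : A.PosSemidef)
    {x : Fin m → ℂ} (hre : (star x ⬝ᵥ A *ᵥ x).re = 0) : A *ᵥ x = 0 := by
  have h := hA.dotProduct_mulVec_nonneg x
  rw [Complex.le_def] at h
  have hz : star x ⬝ᵥ A *ᵥ x = 0 := by
    apply Complex.ext
    · simpa using hre
    · simpa using h.2.symm
  exact (hA.dotProduct_mulVec_zero_iff x).mp hz

/-- the "shift up" operation on vectors indexed by `Fin (m+1)` -/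
noncomputable def up {m : ℕ} (h : Fin (m + 1) → ℂ) : Fin (m + 1) → ℂ :=
  fun j => if hj : (j : ℕ) < m then h ⟨(j : ℕ) + 1, by omega⟩ else 0

lemma up_castSucc {m : ℕ} (h : Fin (m + 1) → ℂ) (i : Fin m) :
    up h i.castSucc = h i.succ := by
  have hi : ((i.castSucc : Fin (m + 1)) : ℕ) < m := by simpa using i.isLt
  rw [up, dif_pos hi]
  exact congrArg h (Fin.ext (by simp))

lemma up_last {m : ℕ} (h : Fin (m + 1) → ℂ) : up h (Fin.last m) = 0 := by
  rw [up, dif_neg]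
  simp

lemma mulVec_apply {m : ℕ} (M : Matrix (Fin m) (Fin m) ℂ) (v : Fin m → ℂ) (i : Fin m) :
    (M *ᵥ v) i = ∑ j, M i j * v j := rfl

section Toeplitz

variable {m : ℕ} {C : ℕ → ℂ} {T : Matrix (Fin (m + 1)) (Fin (m + 1)) ℂ}
  (hT : ∀ i j : Fin (m + 1),
    T i j = if (j : ℕ) ≤ (i : ℕ) then C ((i : ℕ) - (j : ℕ)) else 0)

include hT

lemma Tmul_zero {h : Fin (m + 1) → ℂ} (h0 : h 0 = 0) : (T *ᵥ h) 0 = 0 := by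
  rw [mulVec_apply, Fin.sum_univ_succ, h0, mul_zero, zero_add]
  refine Finset.sum_eq_zero fun j _ => ?_
  rw [hT]
  simp

lemma Tmul_succ {h : Fin (m + 1) → ℂ} (h0 : h 0 = 0) (i : Fin m) :
    (T *ᵥ h) i.succ = (T *ᵥ up h) i.castSucc := by
  rw [mulVec_apply, mulVec_apply, Fin.sum_univ_succ, h0, mul_zero, zero_add,
    Fin.sum_univ_castSucc (f := fun j => T i.castSucc j * up h j), up_last, mul_zero, add_zero]
  refine Finset.sum_congr rfl fun j _ => ?_
  rw [up_castSucc]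
  congr 1
  rw [hT, hT]
  have hc : ((j.succ : Fin (m + 1)) : ℕ) ≤ ((i.succ : Fin (m + 1)) : ℕ) ↔
      ((j.castSucc : Fin (m + 1)) : ℕ) ≤ ((i.castSucc : Fin (m + 1)) : ℕ) := by
    simp [Fin.val_succ, Fin.coe_castSucc]
  split_ifs with h1 h2 h2
  · congr 1
    simp [Fin.val_succ, Fin.coe_castSucc]
  · exact absurd (hc.mp h1) h2
  · exact absurd (hc.mpr h2) h1
  · rfl

lemma ker_shift (hTc : (1 - Tᴴ * T).PosSemidef) {h : Fin (m + 1) → ℂ}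
    (hker : (1 - Tᴴ * T) *ᵥ h = 0) (h0 : h 0 = 0) :
    (1 - Tᴴ * T) *ᵥ up h = 0 := by
  have qh : N2 h - N2 (T *ᵥ h) = 0 := by
    rw [← quad_eq, hker]
    simp
  have hng : N2 (up h) = N2 h := by
    rw [N2, N2, Fin.sum_univ_castSucc (f := fun i => Complex.normSq (up h i)),
      Fin.sum_univ_succ (f := fun i => Complex.normSq (h i)), up_last, h0]
    simp only [Complex.normSq_zero, add_zero, zero_add]
    exact Finset.sum_congr rfl fun i _ => by rw [up_castSucc]
  have hTh : N2 (T *ᵥ h) ≤ N2 (T *ᵥ up h) := by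
    rw [N2, N2, Fin.sum_univ_succ (f := fun i => Complex.normSq ((T *ᵥ h) i)),
      Fin.sum_univ_castSucc (f := fun i => Complex.normSq ((T *ᵥ up h) i)),
      Tmul_zero hT h0]
    simp only [Complex.normSq_zero, zero_add]
    have hsum : (∑ i : Fin m, Complex.normSq ((T *ᵥ h) i.succ)) =
        ∑ i : Fin m, Complex.normSq ((T *ᵥ up h) i.castSucc) :=
      Finset.sum_congr rfl fun i _ => by rw [Tmul_succ hT h0]
    rw [hsum]
    exact le_add_of_nonneg_right (Complex.normSq_nonneg _)
  have hq : 0 ≤ N2 (up h) - N2 (T *ᵥ up h) := by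
    rw [← quad_eq]
    exact psd_re_nonneg hTc _
  have hz : (star (up h) ⬝ᵥ (1 - Tᴴ * T) *ᵥ up h).re = 0 := by
    rw [quad_eq]
    linarith
  exact mulVec_eq_zero_of_re hTc hz

lemma exists_ker_one (hTc : (1 - Tᴴ * T).PosSemidef)
    (hdet : (1 - Tᴴ * T).det = 0) :
    ∃ h : Fin (m + 1) → ℂ, (1 - Tᴴ * T) *ᵥ h = 0 ∧ h 0 = 1 := by
  obtain ⟨v, hv0, hv⟩ := (Matrix.exists_mulVec_eq_zero_iff).mpr hdet
  by_cases hall : ∃ g : Fin (m + 1) → ℂ, (1 - Tᴴ * T) *ᵥ g = 0 ∧ g 0 ≠ 0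
  · obtain ⟨g, hg, hg0⟩ := hall
    refine ⟨(g 0)⁻¹ • g, ?_, ?_⟩
    · rw [mulVec_smul, hg, smul_zero]
    · simp [inv_mul_cancel₀ hg0]
  · push_neg at hall
    exfalso
    apply hv0
    have key : ∀ n : ℕ, (1 - Tᴴ * T) *ᵥ (up^[n] v) = 0 := by
      intro n
      induction n with
      | zero => simpa using hv
      | succ n ih =>
        rw [Function.iterate_succ_apply']
        exact ker_shift hT hTc ih (hall _ ih)
    have val : ∀ n : ℕ, ∀ j : Fin (m + 1), (hj : (j : ℕ) + n ≤ m) →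
        (up^[n] v) j = v ⟨(j : ℕ) + n, by omega⟩ := by
      intro n
      induction n with
      | zero =>
        intro j hj
        simp
      | succ n ih =>
        intro j hj
        rw [Function.iterate_succ_apply']
        have hjm : (j : ℕ) < m := by omega
        have : up (up^[n] v) j = (up^[n] v) ⟨(j : ℕ) + 1, by omega⟩ := by
          rw [up, dif_pos hjm]
        rw [this, ih ⟨(j : ℕ) + 1, by omega⟩ (by simpa using by omega)]
        congr 1
        ext
        simp
        omega
    funext i
    have hi : ((0 : Fin (m + 1)) : ℕ) + (i : ℕ) ≤ m := by
      simpa using Nat.lt_succ_iff.mp i.isLt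
    have h1 := val (i : ℕ) 0 hi
    have h2 : (⟨((0 : Fin (m + 1)) : ℕ) + (i : ℕ), by omega⟩ : Fin (m + 1)) = i := by
      ext
      simp
    rw [h2] at h1
    have h3 := hall _ (key (i : ℕ))
    rw [h1] at h3
    simpa using h3

end Toeplitz

lemma cauchy {ι : Type*} [Fintype ι] (u v : ι → ℂ) :
    Complex.normSq (star u ⬝ᵥ v) ≤ N2 u * N2 v := by
  let u' : EuclideanSpace ℂ ι := (WithLp.equiv 2 (ι → ℂ)).symm u
  let v' : EuclideanSpace ℂ ι := (WithLp.equiv 2 (ι → ℂ)).symm v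
  have hinner : (inner ℂ u' v' : ℂ) = star u ⬝ᵥ v := by
    rw [PiLp.inner_apply, dotProduct]
    refine Finset.sum_congr rfl fun i _ => ?_
    simp [u', v', RCLike.inner_apply, WithLp.equiv_symm_apply, mul_comm]
  have hnu : ‖u'‖ ^ 2 = N2 u := by
    rw [EuclideanSpace.norm_eq, Real.sq_sqrt (by positivity)]
    refine Finset.sum_congr rfl fun i _ => ?_
    simp [u', WithLp.equiv_symm_apply, Complex.sq_norm]
  have hnv : ‖v'‖ ^ 2 = N2 v := by
    rw [EuclideanSpace.norm_eq, Real.sq_sqrt (by positivity)]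
    refine Finset.sum_congr rfl fun i _ => ?_
    simp [v', WithLp.equiv_symm_apply, Complex.sq_norm]
  have h := norm_inner_le_norm (𝕜 := ℂ) u' v'
  have h2 : ‖(inner ℂ u' v' : ℂ)‖ ^ 2 ≤ (‖u'‖ * ‖v'‖) ^ 2 := by
    have := mul_self_le_mul_self (norm_nonneg _) h
    simpa [pow_two] using this
  calc Complex.normSq (star u ⬝ᵥ v) = ‖(inner ℂ u' v' : ℂ)‖ ^ 2 := by
        rw [hinner, Complex.sq_norm]
    _ ≤ (‖u'‖ * ‖v'‖) ^ 2 := h2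
    _ = N2 u * N2 v := by rw [mul_pow, hnu, hnv]

end Stmt19Aux

open Stmt19Aux

/-- Let `C₀, …, C_N` be complex numbers such that the scalar lower
triangular Toeplitz matrix `T_N` is a contraction on `ℂ^{N+1}` (equivalently,
`I - T_N* T_N` is positive semidefinite).  Then `det (I - T_N* T_N) = 0` iff the Kreĭn
shorted operator of `I - T_N* T_N` with respect to the first coordinate line
`M = ℂ ⊕ 0 ⊕ ⋯ ⊕ 0` is zero.  The shorted operator `W` is characterized as the
positive semidefinite matrix whose quadratic form is
`⟨W f, f⟩ = inf_{φ, φ 0 = 0} ⟨(I - T_N* T_N)(f + φ), f + φ⟩`. -/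
theorem scalar_toeplitz_det_zero_iff_shorted_zero (Nn : ℕ) (C : ℕ → ℂ)
    (T : Matrix (Fin (Nn + 1)) (Fin (Nn + 1)) ℂ)
    (hT : ∀ i j : Fin (Nn + 1),
      T i j = if (j : ℕ) ≤ (i : ℕ) then C ((i : ℕ) - (j : ℕ)) else 0)
    (hTc : ((1 : Matrix (Fin (Nn + 1)) (Fin (Nn + 1)) ℂ) - Tᴴ * T).PosSemidef)
    (W : Matrix (Fin (Nn + 1)) (Fin (Nn + 1)) ℂ)
    (hWpos : W.PosSemidef)
    (hW : ∀ f : Fin (Nn + 1) → ℂ,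
      (star f ⬝ᵥ W.mulVec f).re =
        ⨅ φ : {φ : Fin (Nn + 1) → ℂ // φ 0 = 0},
          (star (f + (φ : Fin (Nn + 1) → ℂ)) ⬝ᵥ
            ((1 - Tᴴ * T).mulVec (f + (φ : Fin (Nn + 1) → ℂ)))).re) :
    ((1 : Matrix (Fin (Nn + 1)) (Fin (Nn + 1)) ℂ) - Tᴴ * T).det = 0 ↔ W = 0 := by
  have hne : Nonempty {φ : Fin (Nn + 1) → ℂ // φ 0 = 0} := ⟨⟨0, rfl⟩⟩
  have hterm : ∀ (f : Fin (Nn + 1) → ℂ) (φ : {φ : Fin (Nn + 1) → ℂ // φ 0 = 0}),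
      0 ≤ (star (f + (φ : Fin (Nn + 1) → ℂ)) ⬝ᵥ
        ((1 - Tᴴ * T).mulVec (f + (φ : Fin (Nn + 1) → ℂ)))).re :=
    fun f φ => psd_re_nonneg hTc _
  have hbdd : ∀ f : Fin (Nn + 1) → ℂ,
      BddBelow (Set.range fun φ : {φ : Fin (Nn + 1) → ℂ // φ 0 = 0} =>
        (star (f + (φ : Fin (Nn + 1) → ℂ)) ⬝ᵥ
          ((1 - Tᴴ * T).mulVec (f + (φ : Fin (Nn + 1) → ℂ)))).re) := by
    intro f
    refine ⟨0, ?_⟩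
    rintro x ⟨φ, rfl⟩
    exact hterm f φ
  constructor
  · -- det = 0 → W = 0
    intro hdet
    obtain ⟨h, hker, h1⟩ := exists_ker_one hT hTc hdet
    have hWf0 : ∀ f : Fin (Nn + 1) → ℂ, f 0 = 0 → W *ᵥ f = 0 := by
      intro f hf
      apply mulVec_eq_zero_of_re hWpos
      rw [hW f]
      refine le_antisymm ?_ (le_ciInf fun φ => hterm f φ)
      have hle := ciInf_le (hbdd f) (⟨-f, by simp [hf]⟩ : {φ : Fin (Nn + 1) → ℂ // φ 0 = 0})
      simpa using hle
    have hWe0 : W *ᵥ (Pi.single 0 1 : Fin (Nn + 1) → ℂ) = 0 := by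
      apply mulVec_eq_zero_of_re hWpos
      rw [hW]
      refine le_antisymm ?_ (le_ciInf fun φ => hterm _ φ)
      have hφ0 : (h - (Pi.single 0 1 : Fin (Nn + 1) → ℂ)) 0 = 0 := by simp [h1]
      have hle := ciInf_le (hbdd (Pi.single (0 : Fin (Nn + 1)) (1 : ℂ)))
        (⟨h - Pi.single 0 1, hφ0⟩ : {φ : Fin (Nn + 1) → ℂ // φ 0 = 0})
      have hsum : (Pi.single 0 1 : Fin (Nn + 1) → ℂ) + (h - Pi.single 0 1) = h := by
        abel
      rw [hsum] at hle
      simpa [Matrix.mulVec, hker] using hle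
    ext i j
    have hcol : W *ᵥ (Pi.single j 1 : Fin (Nn + 1) → ℂ) = 0 := by
      rcases eq_or_ne j 0 with rfl | hj
      · exact hWe0
      · exact hWf0 _ (Pi.single_eq_of_ne (Ne.symm hj) 1)
    have hc := congrFun hcol i
    simpa using hc
  · -- W = 0 → det = 0
    intro hW0
    by_contra hdet
    obtain ⟨B, hB⟩ : ∃ B : Matrix (Fin (Nn + 1)) (Fin (Nn + 1)) ℂ, 1 - Tᴴ * T = Bᴴ * B := by
      open scoped MatrixOrder in
      obtain ⟨B, hB⟩ := CStarAlgebra.nonneg_iff_eq_star_mul_self.mp hTc.nonneg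
      exact ⟨B, hB⟩
    have hdetB : B.det ≠ 0 := by
      intro hd
      apply hdet
      rw [hB, Matrix.det_mul, hd, mul_zero]
    have hBinv : B⁻¹ * B = 1 := Matrix.nonsing_inv_mul B (isUnit_iff_ne_zero.mpr hdetB)
    set e : Fin (Nn + 1) → ℂ := Pi.single 0 1 with he
    set r : Fin (Nn + 1) → ℂ := e ᵥ* B⁻¹ with hr
    have key : ∀ x : Fin (Nn + 1) → ℂ, x 0 = 1 →
        1 ≤ N2 (star r) * (star x ⬝ᵥ (1 - Tᴴ * T) *ᵥ x).re := by
      intro x hx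
      have hdot : r ⬝ᵥ (B *ᵥ x) = 1 := by
        rw [dotProduct_mulVec, hr, vecMul_vecMul, hBinv, vecMul_one, he,
          single_dotProduct, one_mul, hx]
      have hq : (star x ⬝ᵥ (1 - Tᴴ * T) *ᵥ x).re = N2 (B *ᵥ x) := by
        rw [hB, ← mulVec_mulVec, dotProduct_mulVec, vecMul_conjTranspose, star_star,
          dot_self_re]
      have hcs := cauchy (star r) (B *ᵥ x)
      rw [star_star, hdot, Complex.normSq_one] at hcs
      rw [hq]
      exact hcs
    have hK : 0 < N2 (star r) := by
      rcases lt_or_ge 0 (N2 (star r)) with hpos | hle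
      · exact hpos
      · exfalso
        have h1 := key e (by simp [he])
        have h2 : N2 (star r) * (star e ⬝ᵥ (1 - Tᴴ * T) *ᵥ e).re ≤ 0 :=
          mul_nonpos_of_nonpos_of_nonneg hle (psd_re_nonneg hTc e)
        linarith
    have hinf0 : (0 : ℝ) = ⨅ φ : {φ : Fin (Nn + 1) → ℂ // φ 0 = 0},
        (star (e + (φ : Fin (Nn + 1) → ℂ)) ⬝ᵥ
          ((1 - Tᴴ * T).mulVec (e + (φ : Fin (Nn + 1) → ℂ)))).re := by
      have hWe := hW e
      rw [hW0] at hWe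
      simpa [Matrix.mulVec] using hWe
    have hbound : (N2 (star r))⁻¹ ≤ ⨅ φ : {φ : Fin (Nn + 1) → ℂ // φ 0 = 0},
        (star (e + (φ : Fin (Nn + 1) → ℂ)) ⬝ᵥ
          ((1 - Tᴴ * T).mulVec (e + (φ : Fin (Nn + 1) → ℂ)))).re := by
      refine le_ciInf fun φ => ?_
      have hx : (e + (φ : Fin (Nn + 1) → ℂ)) 0 = 1 := by
        simp [he, φ.2]
      have h1 := key _ hx
      have h2 := mul_le_mul_of_nonneg_left h1 (inv_nonneg.mpr hK.le)
      rw [mul_one, ← mul_assoc, inv_mul_cancel₀ hK.ne', one_mul] at h2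
      simpa [Matrix.mulVec] using h2
    have : (N2 (star r))⁻¹ ≤ 0 := hbound.trans hinf0.symm.le
    have := inv_pos.mpr hK
    linarith
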